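/- If C is a nonempty proper subset of a digital Jordan curve J, then C and J \ C have the same number of connected components. -/

import Mathlib

open Set

/-- The minimal open neighborhood of a point in a topological space. -/
def minOpenNhd {X : Type*} (t : TopologicalSpace X) (x : X) : Set X :=
  ⋂₀ {U : Set X | t.IsOpen U ∧ x ∈ U}

/-- The specialization-style preorder: `x ≤ y` iff `U_x ⊆ U_y`. -/
def specLE {X : Type*} (t : TopologicalSpace X) (x y : X) : Prop :=
  minOpenNhd t x ⊆ minOpenNhd t y

/-- Two points are adjacent if distinct and comparable in the specialization order. -/
def Adjacent {X : Type*} (t : TopologicalSpace X) (x y : X) : Prop :=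
  x ≠ y ∧ (specLE t x y ∨ specLE t y x)

/-- The adjacency set of a point. -/
def adjSet {X : Type*} (t : TopologicalSpace X) (x : X) : Set X := {y | Adjacent t x y}

/-- A COTS: a connected space in which every 3-point subset has a point separating
the other two. -/
def IsCOTS {X : Type*} (t : TopologicalSpace X) : Prop :=
  @ConnectedSpace X t ∧
    ∀ Y : Set X, Y.ncard = 3 →
      ∃ y ∈ Y, ∃ a ∈ Y \ {y}, ∃ b ∈ Y \ {y},
        @connectedComponentIn X t {y}ᶜ a ≠ @connectedComponentIn X t {y}ᶜ b

/-- An endpoint of a COTS: a point with at most one neighbor. -/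
def IsEndpoint {X : Type*} (t : TopologicalSpace X) (x : X) : Prop :=
  (adjSet t x).ncard ≤ 1

/-- A COTS-path: the continuous image of a finite COTS. -/
def IsCOTSPath {Y : Type*} (tY : TopologicalSpace Y) (P : Set Y) : Prop :=
  ∃ (C : Type) (tC : TopologicalSpace C), Finite C ∧ IsCOTS tC ∧
    ∃ f : C → Y, @Continuous C Y tC tY f ∧ Set.range f = P

/-- A COTS-path with prescribed start and end points. -/
def IsCOTSPathFromTo {Y : Type*} (tY : TopologicalSpace Y) (P : Set Y) (a b : Y) : Prop :=
  ∃ (C : Type) (tC : TopologicalSpace C), Finite C ∧ IsCOTS tC ∧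
    ∃ f : C → Y, @Continuous C Y tC tY f ∧ Set.range f = P ∧
      ∃ c₀ c₁ : C, IsEndpoint tC c₀ ∧ IsEndpoint tC c₁ ∧ f c₀ = a ∧ f c₁ = b

/-- A COTS-arc: the homeomorphic image of a finite COTS. -/
def IsCOTSArc {Y : Type*} (tY : TopologicalSpace Y) (A : Set Y) : Prop :=
  ∃ (C : Type) (tC : TopologicalSpace C), Finite C ∧ IsCOTS tC ∧
    ∃ f : C → Y, @Topology.IsEmbedding C Y tC tY f ∧ Set.range f = A

/-- A COTS-arc with prescribed endpoints. -/
def IsCOTSArcFromTo {Y : Type*} (tY : TopologicalSpace Y) (A : Set Y) (a b : Y) : Prop :=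
  ∃ (C : Type) (tC : TopologicalSpace C), Finite C ∧ IsCOTS tC ∧
    ∃ f : C → Y, @Topology.IsEmbedding C Y tC tY f ∧ Set.range f = A ∧
      ∃ c₀ c₁ : C, IsEndpoint tC c₀ ∧ IsEndpoint tC c₁ ∧ f c₀ = a ∧ f c₁ = b

/-- The COTS-distance: one less than the minimal cardinality of a COTS-arc
joining two points (`⊤` if there is no such arc). -/
noncomputable def cotsDist {X : Type*} (t : TopologicalSpace X) (x y : X) : ℕ∞ :=
  sInf {n : ℕ∞ | ∃ A : Set X, IsCOTSArcFromTo t A x y ∧ (A.ncard : ℕ∞) = n + 1}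

/-- The Khalimsky topology on ℤ. -/
def khal : TopologicalSpace ℤ :=
  TopologicalSpace.generateFrom
    {s : Set ℤ | ∃ n : ℤ, (Odd n ∧ s = {n}) ∨ (Even n ∧ s = {n - 1, n, n + 1})}

/-- The Khalimsky plane topology on ℤ × ℤ. -/
def khalPlane : TopologicalSpace (ℤ × ℤ) := @instTopologicalSpaceProd ℤ ℤ khal khal

/-- A point of the Khalimsky plane is pure if its coordinates have the same parity. -/
def IsPurePt (p : ℤ × ℤ) : Prop := (Even p.1 ∧ Even p.2) ∨ (Odd p.1 ∧ Odd p.2)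

/-- A digital Jordan curve: a finite set of at least 4 points such that removing
any point leaves a COTS-arc. -/
def IsJordanCurve {X : Type*} (t : TopologicalSpace X) (J : Set X) : Prop :=
  J.Finite ∧ 4 ≤ J.ncard ∧ ∀ j ∈ J, IsCOTSArc t (J \ {j})

/-- The interior of a digital Jordan curve in the Khalimsky plane: the union of the
finite (bounded) connected components of its complement. -/
def jInterior (J : Set (ℤ × ℤ)) : Set (ℤ × ℤ) :=
  ⋃₀ {S | ∃ p ∉ J, S = @connectedComponentIn _ khalPlane Jᶜ p ∧ S.Finite}

section Alex

variable {X : Type*} [t : TopologicalSpace X]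

lemma mem_minOpenNhd_self (x : X) : x ∈ minOpenNhd t x := fun _ hU => hU.2

lemma minOpenNhd_subset {x : X} {U : Set X} (hU : IsOpen U) (hx : x ∈ U) :
    minOpenNhd t x ⊆ U := sInter_subset_of_mem ⟨hU, hx⟩

/-- Alexandrov-type property: each minimal open neighborhood is open. -/
def AlexSp (t : TopologicalSpace X) : Prop := ∀ x : X, t.IsOpen (minOpenNhd t x)

lemma alexSp_of_finite [Finite X] : AlexSp t := fun _ =>
  Set.Finite.isOpen_sInter (Set.toFinite _) (fun _ hU => hU.1)

lemma adjacent_symm {x y : X} (h : Adjacent t x y) : Adjacent t y x :=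
  ⟨h.1.symm, h.2.symm⟩

lemma specLE_of_mem (halex : AlexSp t) {x y : X} (h : x ∈ minOpenNhd t y) :
    specLE t x y := minOpenNhd_subset (halex y) h

lemma mem_of_specLE {x y : X} (h : specLE t x y) : x ∈ minOpenNhd t y :=
  h (mem_minOpenNhd_self x)

lemma specLE_iff_specializes (halex : AlexSp t) {x y : X} :
    specLE t x y ↔ x ⤳ y := by
  constructor
  · intro h
    rw [specializes_iff_forall_open]
    intro s hs hys
    exact minOpenNhd_subset hs hys (mem_of_specLE h)
  · intro h
    apply specLE_of_mem halex
    rw [specializes_iff_forall_open] at h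
    intro U hU
    exact h U hU.1 hU.2

/-- One step of the adjacency walk inside a set. -/
def StepIn (t : TopologicalSpace X) (S : Set X) (a b : X) : Prop :=
  a ∈ S ∧ b ∈ S ∧ Adjacent t a b

/-- Reachability by adjacency walks inside a set. -/
def ReachIn (t : TopologicalSpace X) (S : Set X) : X → X → Prop :=
  Relation.ReflTransGen (StepIn t S)

lemma stepIn_symm {S : Set X} : Symmetric (StepIn t S) :=
  fun _ _ h => ⟨h.2.1, h.1, adjacent_symm h.2.2⟩

lemma reachIn_symm {S : Set X} : Symmetric (ReachIn t S) :=
  fun a b h => (@Relation.ReflTransGen.stdSymm _ (StepIn t S) ⟨stepIn_symm⟩).symm a b h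

lemma reachIn_mem {S : Set X} {x y : X} (hx : x ∈ S) (h : ReachIn t S x y) : y ∈ S := by
  induction h with
  | refl => exact hx
  | tail _ hstep _ => exact hstep.2.1

lemma pair_preconnected {a b : X} (h : b ∈ minOpenNhd t a) :
    IsPreconnected ({a, b} : Set X) := by
  intro u v hu hv _ ⟨p, hp, hpu⟩ ⟨q, hq, hqv⟩
  have hbu : b ∈ u := by
    rcases hp with rfl | rfl
    · exact h u ⟨hu, hpu⟩
    · exact hpu
  have hbv : b ∈ v := by
    rcases hq with rfl | rfl
    · exact h v ⟨hv, hqv⟩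
    · exact hqv
  exact ⟨b, by simp, hbu, hbv⟩

lemma adjacent_pair_preconnected {a b : X} (h : Adjacent t a b) :
    IsPreconnected ({a, b} : Set X) := by
  rcases h.2 with h' | h'
  · rw [Set.pair_comm]; exact pair_preconnected (mem_of_specLE h')
  · exact pair_preconnected (mem_of_specLE h')

theorem connectedComponentIn_eq_reach (halex : AlexSp t) {S : Set X} {x : X} (hx : x ∈ S) :
    connectedComponentIn S x = {y | ReachIn t S x y} := by
  apply Subset.antisymm
  · set A := {y | ReachIn t S x y} with hA
    have hAS : A ⊆ S := fun y hy => reachIn_mem hx hy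
    set Vo := ⋃ y ∈ A, minOpenNhd t y with hVo
    set Wo := ⋃ y ∈ S \ A, minOpenNhd t y with hWo
    have hVopen : IsOpen Vo := isOpen_biUnion (fun y _ => halex y)
    have hWopen : IsOpen Wo := isOpen_biUnion (fun y _ => halex y)
    have key1 : S ∩ Vo ⊆ A := by
      rintro z ⟨hzS, hzV⟩
      simp only [hVo, mem_iUnion] at hzV
      obtain ⟨y, hyA, hzy⟩ := hzV
      by_cases hzy' : z = y
      · exact hzy' ▸ hyA
      · have hadj : Adjacent t y z := ⟨fun h => hzy' h.symm, Or.inr (specLE_of_mem halex hzy)⟩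
        exact Relation.ReflTransGen.tail hyA ⟨hAS hyA, hzS, hadj⟩
    have key2 : ∀ z ∈ S ∩ Wo, z ∉ A := by
      rintro z ⟨hzS, hzW⟩ hzA
      simp only [hWo, mem_iUnion] at hzW
      obtain ⟨y, hyW, hzy⟩ := hzW
      by_cases hzy' : z = y
      · exact hyW.2 (hzy' ▸ hzA)
      · have hadj : Adjacent t z y := ⟨hzy', Or.inl (specLE_of_mem halex hzy)⟩
        exact hyW.2 (Relation.ReflTransGen.tail hzA ⟨hzS, hyW.1, hadj⟩)
    intro z hz
    by_contra hzA
    have hcs : connectedComponentIn S x ⊆ S := connectedComponentIn_subset S x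
    have hcov : connectedComponentIn S x ⊆ Vo ∪ Wo := by
      intro w hw
      by_cases hwA : w ∈ A
      · exact Or.inl (mem_biUnion hwA (mem_minOpenNhd_self w))
      · exact Or.inr (mem_biUnion ⟨hcs hw, hwA⟩ (mem_minOpenNhd_self w))
    have hxV : x ∈ connectedComponentIn S x ∩ Vo :=
      ⟨mem_connectedComponentIn hx,
        mem_biUnion (Relation.ReflTransGen.refl) (mem_minOpenNhd_self x)⟩
    have hzW : z ∈ connectedComponentIn S x ∩ Wo :=
      ⟨hz, mem_biUnion ⟨hcs hz, hzA⟩ (mem_minOpenNhd_self z)⟩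
    obtain ⟨w, hwc, hwV, hwW⟩ :=
      isPreconnected_connectedComponentIn Vo Wo hVopen hWopen hcov ⟨x, hxV⟩ ⟨z, hzW⟩
    exact key2 w ⟨hcs hwc, hwW⟩ (key1 ⟨hcs hwc, hwV⟩)
  · intro y hy
    induction hy with
    | refl => exact mem_connectedComponentIn hx
    | @tail b c _ hstep ih =>
      have hpre : IsPreconnected ({b, c} : Set X) := adjacent_pair_preconnected hstep.2.2
      have hsub : ({b, c} : Set X) ⊆ connectedComponentIn S b :=
        hpre.subset_connectedComponentIn (by simp)
          (by rintro w (rfl | rfl); exacts [hstep.1, hstep.2.1])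
      have := connectedComponentIn_eq ih
      rw [this]
      exact hsub (by simp)

lemma connectedComponentIn_eq_iff (halex : AlexSp t) {S : Set X} {x y : X}
    (hx : x ∈ S) (hy : y ∈ S) :
    connectedComponentIn S x = connectedComponentIn S y ↔ ReachIn t S x y := by
  constructor
  · intro h
    have : y ∈ connectedComponentIn S x := h ▸ mem_connectedComponentIn hy
    rwa [connectedComponentIn_eq_reach halex hx] at this
  · intro h
    rw [connectedComponentIn_eq_reach halex hx, connectedComponentIn_eq_reach halex hy]
    ext z
    exact ⟨fun hz => (reachIn_symm h).trans hz, fun hz => h.trans hz⟩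

lemma reachIn_of_preconnected (halex : AlexSp t) {S : Set X} (hS : IsPreconnected S)
    {x y : X} (hx : x ∈ S) (hy : y ∈ S) : ReachIn t S x y := by
  have : S ⊆ connectedComponentIn S x := hS.subset_connectedComponentIn hx (le_refl S)
  have := this hy
  rwa [connectedComponentIn_eq_reach halex hx] at this

end Alex
section Khal

lemma khal_isOpen_odd {n : ℤ} (h : Odd n) : khal.IsOpen {n} :=
  TopologicalSpace.GenerateOpen.basic _ ⟨n, Or.inl ⟨h, rfl⟩⟩

lemma khal_isOpen_even {n : ℤ} (h : Even n) : khal.IsOpen {n - 1, n, n + 1} :=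
  TopologicalSpace.GenerateOpen.basic _ ⟨n, Or.inr ⟨h, rfl⟩⟩

lemma khal_minOpenNhd_odd {n : ℤ} (h : Odd n) : minOpenNhd khal n = {n} := by
  apply Set.Subset.antisymm
  · exact Set.sInter_subset_of_mem ⟨khal_isOpen_odd h, rfl⟩
  · rintro x rfl
    exact @mem_minOpenNhd_self _ khal x

lemma khal_even_subset {n : ℤ} (h : Even n) {U : Set ℤ} (hU : khal.IsOpen U) (hn : n ∈ U) :
    ({n - 1, n, n + 1} : Set ℤ) ⊆ U := by
  induction hU with
  | basic s hs =>
    obtain ⟨m, hm | hm⟩ := hs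
    · exfalso
      obtain ⟨hmo, rfl⟩ := hm
      obtain ⟨a, ha⟩ := h
      obtain ⟨b, hb⟩ := hmo
      have : n = m := hn
      omega
    · obtain ⟨hme, rfl⟩ := hm
      have : n = m := by
        obtain ⟨a, ha⟩ := h
        obtain ⟨b, hb⟩ := hme
        rcases hn with h1 | h1 | h1
        · omega
        · omega
        · simp only [Set.mem_singleton_iff] at h1; omega
      subst this
      exact le_refl _
  | univ => exact fun x _ => trivial
  | inter u v _ _ ihu ihv =>
    exact Set.subset_inter (ihu hn.1) (ihv hn.2)
  | sUnion s _ ih =>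
    obtain ⟨u, hu, hnu⟩ := hn
    exact Set.Subset.trans (ih u hu hnu) (Set.subset_sUnion_of_mem hu)

lemma khal_minOpenNhd_even {n : ℤ} (h : Even n) :
    minOpenNhd khal n = {n - 1, n, n + 1} := by
  apply Set.Subset.antisymm
  · exact Set.sInter_subset_of_mem ⟨khal_isOpen_even h, Or.inr (Or.inl rfl)⟩
  · intro x hx
    intro U hU
    exact khal_even_subset h hU.1 hU.2 hx

lemma khal_alex : AlexSp khal := by
  intro n
  rcases Int.even_or_odd n with h | h
  · rw [khal_minOpenNhd_even h]; exact khal_isOpen_even h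
  · rw [khal_minOpenNhd_odd h]; exact khal_isOpen_odd h

lemma minOpenNhd_prod {A B : Type*} (tA : TopologicalSpace A) (tB : TopologicalSpace B)
    (hA : AlexSp tA) (hB : AlexSp tB) (p : A × B) :
    minOpenNhd (@instTopologicalSpaceProd A B tA tB) p =
      (minOpenNhd tA p.1) ×ˢ (minOpenNhd tB p.2) := by
  letI := tA; letI := tB
  apply Set.Subset.antisymm
  · exact Set.sInter_subset_of_mem
      ⟨@IsOpen.prod _ _ tA tB _ _ (hA p.1) (hB p.2), mem_minOpenNhd_self p.1, mem_minOpenNhd_self p.2⟩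
  · rintro ⟨qa, qb⟩ ⟨hqa, hqb⟩ U ⟨hU, hpU⟩
    obtain ⟨u, v, hu, hv, h1, h2, huv⟩ := isOpen_prod_iff.1 hU p.1 p.2 hpU
    exact huv ⟨minOpenNhd_subset hu h1 hqa, minOpenNhd_subset hv h2 hqb⟩

lemma khalPlane_alex : AlexSp khalPlane := by
  intro p
  rw [show khalPlane = @instTopologicalSpaceProd ℤ ℤ khal khal from rfl,
    minOpenNhd_prod khal khal khal_alex khal_alex p]
  exact @IsOpen.prod _ _ khal khal _ _ (khal_alex p.1) (khal_alex p.2)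

end Khal
section Graph

variable {V : Type*} {adj : V → V → Prop}

/-- One graph step inside a set. -/
def GStep (adj : V → V → Prop) (S : Set V) (a b : V) : Prop := a ∈ S ∧ b ∈ S ∧ adj a b

/-- Graph reachability inside a set. -/
def GReach (adj : V → V → Prop) (S : Set V) : V → V → Prop :=
  Relation.ReflTransGen (GStep adj S)

lemma gReach_symm (hsymm : Symmetric adj) {S : Set V} : Symmetric (GReach adj S) :=
  fun a b h => (@Relation.ReflTransGen.stdSymm _ (GStep adj S) ⟨fun _ _ h => ⟨h.2.1, h.1, hsymm h.2.2⟩⟩).symm a b h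

lemma chain_reach {l : List V} (hc : List.Chain' adj l) {S : Set V} (i : ℕ)
    (hi : i < l.length) :
    ∀ j (hj : j < l.length), i ≤ j →
      (∀ k (hk : k < l.length), i ≤ k → k ≤ j → l.get ⟨k, hk⟩ ∈ S) →
      GReach adj S (l.get ⟨i, hi⟩) (l.get ⟨j, hj⟩) := by
  intro j
  induction j with
  | zero =>
    intro hj hij _
    have h0 : i = 0 := by omega
    subst h0; exact Relation.ReflTransGen.refl
  | succ m ih =>
    intro hj hij hS
    rcases Nat.lt_or_ge i (m + 1) with h | h
    · have hm : m < l.length := by omega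
      have hr := ih hm (by omega) (fun k hk h1 h2 => hS k hk h1 (by omega))
      exact hr.tail ⟨hS m hm (by omega) (by omega), hS (m + 1) hj (by omega) (le_refl _),
        List.isChain_iff_getElem.1 hc m (by omega)⟩
    · have h0 : i = m + 1 := by omega
      subst h0; exact Relation.ReflTransGen.refl

lemma greach_pairs (hsymm : Symmetric adj) {S : Set V} {p q : V}
    (hpq : GReach adj S p q) :
    ∀ u v, (u = p ∨ u = q) → (v = p ∨ v = q) → GReach adj S u v := by
  rintro u v (rfl | rfl) (rfl | rfl)
  · exact Relation.ReflTransGen.refl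
  · exact hpq
  · exact gReach_symm hsymm hpq
  · exact Relation.ReflTransGen.refl

section PathThm

variable (hsymm : Symmetric adj) (hirr : ∀ a, ¬ adj a a)
  (hsep : ∀ a b c : V, a ≠ b → a ≠ c → b ≠ c →
    ∃ y ∈ ({a, b, c} : Set V), ∃ u ∈ ({a, b, c} : Set V) \ {y},
      ∃ v ∈ ({a, b, c} : Set V) \ {y}, ¬ GReach adj {y}ᶜ u v)

include hsymm hirr hsep in
lemma no_three_neighbors {w a b c : V} (ha : adj w a) (hb : adj w b) (hc : adj w c)
    (hab : a ≠ b) (hac : a ≠ c) (hbc : b ≠ c) : False := by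
  obtain ⟨y, hy, u, ⟨huY, huy⟩, v, ⟨hvY, hvy⟩, hnr⟩ := hsep a b c hab hac hbc
  apply hnr
  have hwy : w ≠ y := by
    rcases hy with rfl | rfl | rfl
    · exact fun h => hirr _ (h ▸ ha)
    · exact fun h => hirr _ (h ▸ hb)
    · exact fun h => hirr _ (h ▸ hc)
  have hadj : ∀ z ∈ ({a, b, c} : Set V), adj w z := by
    rintro z (rfl | rfl | rfl) <;> assumption
  have hu' : u ∈ ({y}ᶜ : Set V) := huy
  have hv' : v ∈ ({y}ᶜ : Set V) := hvy
  have hw' : w ∈ ({y}ᶜ : Set V) := fun h => hwy h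
  exact Relation.ReflTransGen.tail
    (Relation.ReflTransGen.single ⟨hu', hw', hsymm (hadj u huY)⟩)
    ⟨hw', hv', hadj v hvY⟩

include hsymm hirr hsep in
theorem cots_path_list [Finite V] [Nonempty V]
    (hconn : ∀ a b : V, GReach adj Set.univ a b) :
    ∃ l : List V, l.Nodup ∧ (∀ v : V, v ∈ l) ∧ List.Chain' adj l ∧
      ∀ i j (hi : i < l.length) (hj : j < l.length),
        adj (l.get ⟨i, hi⟩) (l.get ⟨j, hj⟩) → j = i + 1 ∨ i = j + 1 := by
  classical
  haveI := Fintype.ofFinite V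
  set LS : Set ℕ := {k | ∃ l : List V, l.Nodup ∧ List.Chain' adj l ∧ l.length = k} with hLS
  have hmem1 : (1 : ℕ) ∈ LS :=
    ⟨[Classical.arbitrary V], List.nodup_singleton _, List.isChain_singleton _, rfl⟩
  have hne : LS.Nonempty := ⟨1, hmem1⟩
  have hbdd : BddAbove LS := ⟨Fintype.card V, by
    rintro k ⟨l, hnd, _, rfl⟩
    exact hnd.length_le_card⟩
  obtain ⟨l, hnd, hch, hlen⟩ := Nat.sSup_mem hne hbdd
  have hmax : ∀ l' : List V, l'.Nodup → List.Chain' adj l' → l'.length ≤ l.length := by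
    intro l' h1 h2
    rw [hlen]
    exact le_csSup hbdd ⟨l', h1, h2, rfl⟩
  have hlpos : 0 < l.length := by
    rw [hlen]
    exact lt_of_lt_of_le Nat.zero_lt_one (le_csSup hbdd hmem1)
  have hcov : ∀ v : V, v ∈ l := by
    by_contra hv
    push_neg at hv
    obtain ⟨v, hvl⟩ := hv
    have hbd : ∀ a w, GReach adj Set.univ a w → a ∈ l → w ∉ l →
        ∃ x, x ∈ l ∧ ∃ z, z ∉ l ∧ adj x z := by
      intro a w hr
      induction hr with
      | refl => intro ha hw; exact absurd ha hw
      | @tail b c _ hstep ih =>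
        intro ha hc
        by_cases hb : b ∈ l
        · exact ⟨b, hb, c, hc, hstep.2.2⟩
        · exact ih ha hb
    obtain ⟨x, hx, z, hz, hxz⟩ :=
      hbd (l.get ⟨0, hlpos⟩) v (hconn _ _) (List.get_mem l ⟨0, hlpos⟩) hvl
    obtain ⟨⟨i, hi⟩, rfl⟩ := List.mem_iff_get.1 hx
    rcases Nat.eq_zero_or_pos i with rfl | hipos
    · -- prepend z
      obtain ⟨hd, tl, rfl⟩ : ∃ hd tl, l = hd :: tl := by
        cases l with
        | nil => exact absurd hlpos (by simp)
        | cons hd tl => exact ⟨hd, tl, rfl⟩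
      have hnd' : (z :: hd :: tl).Nodup := List.nodup_cons.2 ⟨hz, hnd⟩
      have hch' : List.Chain' adj (z :: hd :: tl) := by
        show List.IsChain adj _
        rw [List.isChain_cons_cons]
        exact ⟨hsymm hxz, hch⟩
      have := hmax _ hnd' hch'
      simp at this
    · rcases Nat.lt_or_ge (i + 1) l.length with hilt | hige
      · -- internal vertex with extra neighbor z : contradiction
        have h1 : adj (l.get ⟨i - 1, by omega⟩) (l.get ⟨i, hi⟩) := by
          have := List.isChain_iff_getElem.1 hch (i - 1) (by omega)
          have he : i - 1 + 1 = i := by omega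
          simp only [he] at this
          exact this
        have h2 : adj (l.get ⟨i, hi⟩) (l.get ⟨i + 1, hilt⟩) :=
          List.isChain_iff_getElem.1 hch i (by omega)
        refine no_three_neighbors hsymm hirr hsep (w := l.get ⟨i, hi⟩)
          (hsymm h1) h2 hxz ?_ ?_ ?_
        · intro h
          rw [hnd.get_inj_iff] at h
          have h2 : i - 1 = i + 1 := congrArg Fin.val h
          omega
        · intro h; exact hz (h ▸ List.get_mem l ⟨i - 1, by omega⟩)
        · intro h; exact hz (h ▸ List.get_mem l ⟨i + 1, hilt⟩)
      · -- append z
        have hne' : l ≠ [] := by intro h; rw [h] at hlpos; simp at hlpos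
        have hnd' : (l ++ [z]).Nodup :=
          List.nodup_append.2 ⟨hnd, List.nodup_singleton _, fun a ha b hb hab => hz (by simp at hb; subst hb; exact hab ▸ ha)⟩
        have hch' : List.Chain' adj (l ++ [z]) := by
          show List.IsChain adj _
          rw [List.isChain_append]
          refine ⟨hch, List.isChain_singleton _, ?_⟩
          intro x' hx' y' hy'
          rw [List.getLast?_eq_getLast hne'] at hx'
          simp only [Option.mem_some_iff] at hx'
          simp only [List.head?_cons, Option.mem_some_iff] at hy'
          subst hx' hy'
          rw [List.getLast_eq_getElem]
          have he : l.length - 1 = i := by omega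
          simp only [he]
          exact hxz
        have := hmax _ hnd' hch'
        simp at this
  have hauxne : ∀ (i j : ℕ) (hi : i < l.length) (hj : j < l.length), i ≠ j →
      l.get ⟨i, hi⟩ ≠ l.get ⟨j, hj⟩ := by
    intro i j hi hj hij h
    rw [hnd.get_inj_iff] at h
    have h2 : i = j := congrArg Fin.val h
    omega
  have haux : ∀ i j (hi : i < l.length) (hj : j < l.length), i < j →
      adj (l.get ⟨i, hi⟩) (l.get ⟨j, hj⟩) → j = i + 1 := by
    intro i j hi hj hij hadj
    by_contra hne'
    have hij2 : i + 2 ≤ j := by omega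
    rcases Nat.lt_or_ge (j + 1) l.length with hjlt | hjge
    · -- l[j] has 3 neighbors
      have h1 : adj (l.get ⟨j - 1, by omega⟩) (l.get ⟨j, hj⟩) := by
        have := List.isChain_iff_getElem.1 hch (j - 1) (by omega)
        have he : j - 1 + 1 = j := by omega
        simp only [he] at this
        exact this
      have h2 : adj (l.get ⟨j, hj⟩) (l.get ⟨j + 1, hjlt⟩) :=
        List.isChain_iff_getElem.1 hch j (by omega)
      exact no_three_neighbors hsymm hirr hsep (w := l.get ⟨j, hj⟩)
        (hsymm hadj) (hsymm h1) h2
        (hauxne i (j - 1) hi (by omega) (by omega))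
        (hauxne i (j + 1) hi hjlt (by omega))
        (hauxne (j - 1) (j + 1) (by omega) hjlt (by omega))
    · rcases Nat.eq_zero_or_pos i with rfl | hipos
      · -- wrap edge l[0] -- l[j], j = length - 1, j ≥ 2 : contradict separation
        have h1j : 1 < j := by omega
        have h1l : 1 < l.length := by omega
        obtain ⟨y, hy, u, ⟨huY, huy⟩, v, ⟨hvY, hvy⟩, hnr⟩ :=
          hsep (l.get ⟨0, hi⟩) (l.get ⟨1, h1l⟩) (l.get ⟨j, hj⟩)
            (hauxne 0 1 hi h1l (by omega))
            (hauxne 0 j hi hj (by omega))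
            (hauxne 1 j h1l hj (by omega))
        apply hnr
        have humem : ∀ w, w ∈ ({l.get ⟨0, hi⟩, l.get ⟨1, h1l⟩, l.get ⟨j, hj⟩} : Set V) \ {y} →
            w ∈ ({l.get ⟨0, hi⟩, l.get ⟨1, h1l⟩, l.get ⟨j, hj⟩} : Set V) ∧ w ≠ y :=
          fun w hw => ⟨hw.1, hw.2⟩
        rcases hy with rfl | rfl | rfl
        · -- y = l[0] : reach l[1] … l[j] along the chain
          have hpq : GReach adj ({l.get ⟨0, hi⟩}ᶜ) (l.get ⟨1, h1l⟩) (l.get ⟨j, hj⟩) := by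
            apply chain_reach hch 1 h1l j hj (by omega)
            intro k hk h1k _
            exact hauxne k 0 hk hi (by omega)
          refine greach_pairs hsymm hpq u v ?_ ?_
          · rcases huY with h | h | h
            · exact absurd h huy
            · exact Or.inl h
            · exact Or.inr h
          · rcases hvY with h | h | h
            · exact absurd h hvy
            · exact Or.inl h
            · exact Or.inr h
        · -- y = l[1] : direct wrap edge l[0] -- l[j]
          have hpq : GReach adj ({l.get ⟨1, h1l⟩}ᶜ) (l.get ⟨0, hi⟩) (l.get ⟨j, hj⟩) :=
            Relation.ReflTransGen.single
              ⟨hauxne 0 1 hi h1l (by omega), hauxne j 1 hj h1l (by omega), hadj⟩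
          refine greach_pairs hsymm hpq u v ?_ ?_
          · rcases huY with h | h | h
            · exact Or.inl h
            · exact absurd h huy
            · exact Or.inr h
          · rcases hvY with h | h | h
            · exact Or.inl h
            · exact absurd h hvy
            · exact Or.inr h
        · -- y = l[j] : direct edge l[0] -- l[1]
          have hpq : GReach adj ({l.get ⟨j, hj⟩}ᶜ) (l.get ⟨0, hi⟩) (l.get ⟨1, h1l⟩) :=
            Relation.ReflTransGen.single
              ⟨hauxne 0 j hi hj (by omega), hauxne 1 j h1l hj (by omega),
                List.isChain_iff_getElem.1 hch 0 (by omega)⟩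
          refine greach_pairs hsymm hpq u v ?_ ?_
          · rcases huY with h | h | h
            · exact Or.inl h
            · exact Or.inr h
            · exact absurd h huy
          · rcases hvY with h | h | h
            · exact Or.inl h
            · exact Or.inr h
            · exact absurd h hvy
      · -- l[i] has 3 neighbors
        have h1 : adj (l.get ⟨i - 1, by omega⟩) (l.get ⟨i, hi⟩) := by
          have := List.isChain_iff_getElem.1 hch (i - 1) (by omega)
          have he : i - 1 + 1 = i := by omega
          simp only [he] at this
          exact this
        have h2 : adj (l.get ⟨i, hi⟩) (l.get ⟨i + 1, by omega⟩) :=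
          List.isChain_iff_getElem.1 hch i (by omega)
        exact no_three_neighbors hsymm hirr hsep (w := l.get ⟨i, hi⟩)
          hadj (hsymm h1) h2
          (hauxne j (i - 1) hj (by omega) (by omega))
          (hauxne j (i + 1) hj (by omega) (by omega))
          (hauxne (i - 1) (i + 1) (by omega) (by omega) (by omega))
  refine ⟨l, hnd, hcov, hch, ?_⟩
  intro i j hi hj hadj
  rcases lt_trichotomy i j with h | h | h
  · exact Or.inl (haux i j hi hj h hadj)
  · exfalso
    subst h
    exact hirr _ hadj
  · exact Or.inr (haux j i hj hi h (hsymm hadj))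

end PathThm

end Graph
section Arc

/-- Khalimsky-plane adjacency. -/
def adjP : (ℤ × ℤ) → (ℤ × ℤ) → Prop := Adjacent khalPlane

lemma adjP_symm : Symmetric adjP := fun _ _ h => @adjacent_symm _ khalPlane _ _ h

lemma adjP_irr : ∀ a, ¬ adjP a a := fun _ h => h.1 rfl

lemma adjacent_iff_of_embedding {C Y : Type*} {tC : TopologicalSpace C}
    {tY : TopologicalSpace Y} (halexC : AlexSp tC) (halexY : AlexSp tY) {f : C → Y}
    (hf : @Topology.IsEmbedding C Y tC tY f) (a b : C) :
    Adjacent tC a b ↔ Adjacent tY (f a) (f b) := by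
  letI := tC; letI := tY
  unfold Adjacent
  rw [specLE_iff_specializes halexC, specLE_iff_specializes halexC,
      specLE_iff_specializes halexY, specLE_iff_specializes halexY,
      hf.toIsInducing.specializes_iff, hf.toIsInducing.specializes_iff]
  constructor
  · rintro ⟨h1, h2⟩
    exact ⟨fun h => h1 (hf.injective h), h2⟩
  · rintro ⟨h1, h2⟩
    exact ⟨fun h => h1 (congrArg f h), h2⟩

/-- Only-consecutive-adjacency property of a list. -/
def Consec (l : List (ℤ × ℤ)) : Prop :=
  ∀ i j (hi : i < l.length) (hj : j < l.length),
    adjP (l.get ⟨i, hi⟩) (l.get ⟨j, hj⟩) → j = i + 1 ∨ i = j + 1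

theorem arc_path_list {A : Set (ℤ × ℤ)} (hA : IsCOTSArc khalPlane A) (hne : A.Nonempty) :
    ∃ l : List (ℤ × ℤ), l.Nodup ∧ (∀ v, v ∈ l ↔ v ∈ A) ∧ List.Chain' adjP l ∧ Consec l := by
  obtain ⟨C, tC, hfin, ⟨hconnSp, hsep⟩, f, hemb, hrange⟩ := hA
  haveI := hfin
  haveI : Nonempty C := by
    obtain ⟨a, ha⟩ := hne
    rw [← hrange] at ha
    obtain ⟨c, _⟩ := ha
    exact ⟨c⟩
  letI := tC
  haveI : ConnectedSpace C := hconnSp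
  have halexC : AlexSp tC := alexSp_of_finite
  have halexP : AlexSp khalPlane := khalPlane_alex
  have hsymm : Symmetric (Adjacent tC) := fun _ _ h => adjacent_symm h
  have hirr : ∀ a : C, ¬ Adjacent tC a a := fun _ h => h.1 rfl
  have hconn : ∀ a b : C, GReach (Adjacent tC) Set.univ a b := fun a b =>
    reachIn_of_preconnected halexC isPreconnected_univ (Set.mem_univ a) (Set.mem_univ b)
  have hsepC : ∀ a b c : C, a ≠ b → a ≠ c → b ≠ c →
      ∃ y ∈ ({a, b, c} : Set C), ∃ u ∈ ({a, b, c} : Set C) \ {y},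
        ∃ v ∈ ({a, b, c} : Set C) \ {y}, ¬ GReach (Adjacent tC) {y}ᶜ u v := by
    intro a b c hab hac hbc
    obtain ⟨y, hy, u, hu, v, hv, hne'⟩ :=
      hsep {a, b, c} (Set.ncard_eq_three.2 ⟨a, b, c, hab, hac, hbc, rfl⟩)
    refine ⟨y, hy, u, hu, v, hv, fun hr => hne' ?_⟩
    exact (connectedComponentIn_eq_iff halexC hu.2 hv.2).2 hr
  obtain ⟨lC, hnd, hcov, hch, hcons⟩ := cots_path_list hsymm hirr hsepC hconn
  have hinj : Function.Injective f := @Topology.IsEmbedding.injective _ _ tC khalPlane f hemb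
  refine ⟨lC.map f, hnd.map hinj, ?_, ?_, ?_⟩
  · intro v
    rw [List.mem_map, ← hrange]
    constructor
    · rintro ⟨c, _, rfl⟩; exact ⟨c, rfl⟩
    · rintro ⟨c, rfl⟩; exact ⟨c, hcov c, rfl⟩
  · show List.IsChain adjP _
    rw [List.isChain_map]
    exact List.IsChain.imp
      (fun a b h => (adjacent_iff_of_embedding halexC halexP hemb a b).1 h) hch
  · intro i j hi hj hadj
    rw [List.length_map] at hi hj
    have h1 : (lC.map f).get ⟨i, by simpa using hi⟩ = f (lC.get ⟨i, hi⟩) := by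
      simp [List.getElem_map]
    have h2 : (lC.map f).get ⟨j, by simpa using hj⟩ = f (lC.get ⟨j, hj⟩) := by
      simp [List.getElem_map]
    rw [h1, h2] at hadj
    exact hcons i j hi hj ((adjacent_iff_of_embedding halexC halexP hemb _ _).2 hadj)

end Arc

section Jordan

variable {J : Set (ℤ × ℤ)} (hJ : IsJordanCurve khalPlane J)

include hJ in
lemma jordan_pathlist {j : ℤ × ℤ} (hj : j ∈ J) :
    ∃ l : List (ℤ × ℤ), l.Nodup ∧ (∀ v, v ∈ l ↔ v ∈ J \ {j}) ∧ List.Chain' adjP l ∧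
      Consec l ∧ l.length = J.ncard - 1 := by
  classical
  have hn4 := hJ.2.1
  have hne : (J \ {j}).Nonempty := by
    obtain ⟨b, hb, hbj⟩ := Set.exists_ne_of_one_lt_ncard (by omega : 1 < J.ncard) j
    exact ⟨b, hb, hbj⟩
  obtain ⟨l, hnd, hcov, hch, hcons⟩ := arc_path_list (hJ.2.2 j hj) hne
  refine ⟨l, hnd, hcov, hch, hcons, ?_⟩
  have h1 : (J \ {j}) = ↑l.toFinset := by
    ext v
    rw [Finset.mem_coe, List.mem_toFinset, hcov]
  have h2 := Set.ncard_diff_singleton_of_mem hj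
  rw [h1, Set.ncard_coe_finset, List.toFinset_card_of_nodup hnd] at h2
  exact h2

include hJ in
lemma jordan_no_three {w a b c : ℤ × ℤ} (hw : w ∈ J) (ha : a ∈ J) (hb : b ∈ J) (hc : c ∈ J)
    (hwa : adjP w a) (hwb : adjP w b) (hwc : adjP w c)
    (hab : a ≠ b) (hac : a ≠ c) (hbc : b ≠ c) : False := by
  classical
  have hwa' : w ≠ a := fun h => adjP_irr a (h ▸ hwa)
  have hwb' : w ≠ b := fun h => adjP_irr b (h ▸ hwb)
  have hwc' : w ≠ c := fun h => adjP_irr c (h ▸ hwc)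
  by_cases hex : ∃ j ∈ J, j ∉ ({w, a, b, c} : Set (ℤ × ℤ))
  · obtain ⟨j, hjJ, hj4⟩ := hex
    obtain ⟨l, hnd, hcov, hch, hcons, hlen⟩ := jordan_pathlist hJ hjJ
    have hmem : ∀ x, x ∈ ({w, a, b, c} : Set (ℤ × ℤ)) → x ∈ J → x ∈ l := by
      intro x hx hxJ
      rw [hcov]
      exact ⟨hxJ, fun h => hj4 ((Set.mem_singleton_iff.1 h) ▸ hx)⟩
    obtain ⟨⟨iw, hiw⟩, hw'⟩ := List.mem_iff_get.1 (hmem w (by simp) hw)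
    obtain ⟨⟨ia, hia⟩, ha'⟩ := List.mem_iff_get.1 (hmem a (by simp) ha)
    obtain ⟨⟨ib, hib⟩, hb'⟩ := List.mem_iff_get.1 (hmem b (by simp) hb)
    obtain ⟨⟨ic, hic⟩, hc'⟩ := List.mem_iff_get.1 (hmem c (by simp) hc)
    have e1 := hcons iw ia hiw hia (by rw [hw', ha']; exact hwa)
    have e2 := hcons iw ib hiw hib (by rw [hw', hb']; exact hwb)
    have e3 := hcons iw ic hiw hic (by rw [hw', hc']; exact hwc)
    have d1 : ia ≠ ib := by intro h; subst h; exact hab (ha'.symm.trans hb')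
    have d2 : ia ≠ ic := by intro h; subst h; exact hac (ha'.symm.trans hc')
    have d3 : ib ≠ ic := by intro h; subst h; exact hbc (hb'.symm.trans hc')
    omega
  · have hJeq : J = {w, a, b, c} := by
      apply Set.Subset.antisymm
      · intro x hx
        by_contra hx4
        exact hex ⟨x, hx, hx4⟩
      · rintro x (rfl | rfl | rfl | rfl) <;> assumption
    have key : ∀ p q r : ℤ × ℤ, p ∈ J → ({w, q, r} : Set (ℤ × ℤ)) ⊆ J \ {p} →
        adjP w q → adjP w r → q ≠ r → w ≠ q → w ≠ r → ¬ adjP q r := by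
      intro p q r hp hsub hq hr hqr hwq hwr hadj
      obtain ⟨l, hnd, hcov, hch, hcons, hlen⟩ := jordan_pathlist hJ hp
      have hmem : ∀ x, x ∈ ({w, q, r} : Set (ℤ × ℤ)) → x ∈ l := by
        intro x hx
        rw [hcov]
        exact hsub hx
      obtain ⟨⟨iw, hiw⟩, hw'⟩ := List.mem_iff_get.1 (hmem w (by simp))
      obtain ⟨⟨iq, hiq⟩, hq'⟩ := List.mem_iff_get.1 (hmem q (by simp))
      obtain ⟨⟨ir, hir⟩, hr'⟩ := List.mem_iff_get.1 (hmem r (by simp))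
      have e1 := hcons iw iq hiw hiq (by rw [hw', hq']; exact hq)
      have e2 := hcons iw ir hiw hir (by rw [hw', hr']; exact hr)
      have e3 := hcons iq ir hiq hir (by rw [hq', hr']; exact hadj)
      have d1 : iq ≠ ir := by intro h; subst h; exact hqr (hq'.symm.trans hr')
      have d2 : iw ≠ iq := by intro h; subst h; exact hwq (hw'.symm.trans hq')
      have d3 : iw ≠ ir := by intro h; subst h; exact hwr (hw'.symm.trans hr')
      omega
    have nbc : ¬ adjP b c := by
      refine key a b c ha ?_ hwb hwc hbc hwb' hwc'
      rintro x (rfl | rfl | rfl)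
      · exact ⟨hw, fun h => hwa' (Set.mem_singleton_iff.1 h)⟩
      · exact ⟨hb, fun h => hab (Set.mem_singleton_iff.1 h).symm⟩
      · exact ⟨hc, fun h => hac (Set.mem_singleton_iff.1 h).symm⟩
    have nac : ¬ adjP a c := by
      refine key b a c hb ?_ hwa hwc hac hwa' hwc'
      rintro x (rfl | rfl | rfl)
      · exact ⟨hw, fun h => hwb' (Set.mem_singleton_iff.1 h)⟩
      · exact ⟨ha, fun h => hab (Set.mem_singleton_iff.1 h)⟩
      · exact ⟨hc, fun h => hbc (Set.mem_singleton_iff.1 h).symm⟩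
    have nab : ¬ adjP a b := by
      refine key c a b hc ?_ hwa hwb hab hwa' hwb'
      rintro x (rfl | rfl | rfl)
      · exact ⟨hw, fun h => hwc' (Set.mem_singleton_iff.1 h)⟩
      · exact ⟨ha, fun h => hac (Set.mem_singleton_iff.1 h)⟩
      · exact ⟨hb, fun h => hbc (Set.mem_singleton_iff.1 h)⟩
    obtain ⟨l, hnd, hcov, hch, hcons, hlen⟩ := jordan_pathlist hJ hw
    have hn4 := hJ.2.1
    have hlen2 : 2 ≤ l.length := by omega
    have gm : ∀ x, x ∈ J \ {w} → x = a ∨ x = b ∨ x = c := by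
      intro x hx
      have h1 : x ∈ ({w, a, b, c} : Set (ℤ × ℤ)) := hJeq ▸ hx.1
      rcases h1 with h1 | h1 | h1 | h1
      · exact absurd h1 hx.2
      · exact Or.inl h1
      · exact Or.inr (Or.inl h1)
      · exact Or.inr (Or.inr h1)
    have hpairs : ∀ x y, x ∈ J \ {w} → y ∈ J \ {w} → x ≠ y → ¬ adjP x y := by
      intro x y hx hy hxy
      rcases gm x hx with rfl | rfl | rfl <;> rcases gm y hy with rfl | rfl | rfl
      · exact absurd rfl hxy
      · exact nab
      · exact nac
      · exact fun h => nab (adjP_symm h)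
      · exact absurd rfl hxy
      · exact nbc
      · exact fun h => nac (adjP_symm h)
      · exact fun h => nbc (adjP_symm h)
      · exact absurd rfl hxy
    have g0 : l.get ⟨0, by omega⟩ ∈ J \ {w} := (hcov _).1 (List.get_mem l ⟨0, by omega⟩)
    have g1 : l.get ⟨1, by omega⟩ ∈ J \ {w} := (hcov _).1 (List.get_mem l ⟨1, by omega⟩)
    have hadj01 : adjP (l.get ⟨0, by omega⟩) (l.get ⟨1, by omega⟩) :=
      List.isChain_iff_getElem.1 hch 0 (by omega)
    have hne01 : l.get ⟨0, by omega⟩ ≠ l.get ⟨1, by omega⟩ := by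
      intro h
      rw [hnd.get_inj_iff] at h
      have h2 : (0 : ℕ) = 1 := congrArg Fin.val h
      omega
    exact hpairs _ _ g0 g1 hne01 hadj01

include hJ in
lemma jordan_two_nbrs {x : ℤ × ℤ} (hx : x ∈ J) :
    ∃ u v, u ∈ J ∧ v ∈ J ∧ u ≠ v ∧ adjP x u ∧ adjP x v := by
  classical
  have hn4 := hJ.2.1
  have h1 : ∃ w ∈ J, adjP x w := by
    obtain ⟨j, hjJ, hjx⟩ := Set.exists_ne_of_one_lt_ncard (by omega : 1 < J.ncard) x
    obtain ⟨l, hnd, hcov, hch, hcons, hlen⟩ := jordan_pathlist hJ hjJ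
    have hxl : x ∈ l := (hcov x).2 ⟨hx, fun h => hjx (Set.mem_singleton_iff.1 h).symm⟩
    obtain ⟨⟨i, hi⟩, hx'⟩ := List.mem_iff_get.1 hxl
    have hlen2 : 2 ≤ l.length := by omega
    rcases Nat.lt_or_ge (i + 1) l.length with hlt | hge
    · refine ⟨l.get ⟨i + 1, hlt⟩, ((hcov _).1 (List.get_mem l ⟨i + 1, hlt⟩)).1, ?_⟩
      rw [← hx']
      exact List.isChain_iff_getElem.1 hch i (by omega)
    · have hi1 : 1 ≤ i := by omega
      refine ⟨l.get ⟨i - 1, by omega⟩, ((hcov _).1 (List.get_mem l ⟨i - 1, by omega⟩)).1, ?_⟩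
      rw [← hx']
      apply adjP_symm
      have h2 := List.isChain_iff_getElem.1 hch (i - 1) (by omega)
      have he : i - 1 + 1 = i := by omega
      simp only [he] at h2
      exact h2
  obtain ⟨w, hwJ, hxw⟩ := h1
  obtain ⟨l, hnd, hcov, hch, hcons, hlen⟩ := jordan_pathlist hJ hwJ
  have hxw' : x ≠ w := fun h => adjP_irr _ (h ▸ hxw)
  have hxl : x ∈ l := (hcov x).2 ⟨hx, hxw'⟩
  obtain ⟨⟨i, hi⟩, hx'⟩ := List.mem_iff_get.1 hxl
  have hlen3 : 3 ≤ l.length := by omega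
  rcases Nat.lt_or_ge (i + 1) l.length with hlt | hge
  · have hy : l.get ⟨i + 1, hlt⟩ ∈ J \ {w} := (hcov _).1 (List.get_mem l ⟨i + 1, hlt⟩)
    refine ⟨w, l.get ⟨i + 1, hlt⟩, hwJ, hy.1, ?_, hxw, ?_⟩
    · intro h
      exact hy.2 (Set.mem_singleton_iff.2 h.symm)
    · rw [← hx']
      exact List.isChain_iff_getElem.1 hch i (by omega)
  · have hi1 : 1 ≤ i := by omega
    have hy : l.get ⟨i - 1, by omega⟩ ∈ J \ {w} :=
      (hcov _).1 (List.get_mem l ⟨i - 1, by omega⟩)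
    refine ⟨w, l.get ⟨i - 1, by omega⟩, hwJ, hy.1, ?_, hxw, ?_⟩
    · intro h
      exact hy.2 (Set.mem_singleton_iff.2 h.symm)
    · rw [← hx']
      apply adjP_symm
      have h2 := List.isChain_iff_getElem.1 hch (i - 1) (by omega)
      have he : i - 1 + 1 = i := by omega
      simp only [he] at h2
      exact h2

include hJ in
theorem jordan_cycle :
    ∃ L : List (ℤ × ℤ), L.Nodup ∧ (∀ v, v ∈ L ↔ v ∈ J) ∧ L.length = J.ncard ∧
      ∀ i j (hi : i < L.length) (hj : j < L.length),
        adjP (L.get ⟨i, hi⟩) (L.get ⟨j, hj⟩) ↔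
          (i ≠ j ∧ (j = i + 1 ∨ i = j + 1 ∨ (i = 0 ∧ j = L.length - 1) ∨
            (j = 0 ∧ i = L.length - 1))) := by
  classical
  have hn4 := hJ.2.1
  obtain ⟨j₀, hj₀⟩ : J.Nonempty := by
    rcases Set.eq_empty_or_nonempty J with h | h
    · rw [h] at hn4; simp [Set.ncard_empty] at hn4
    · exact h
  obtain ⟨l, hnd, hcov, hch, hcons, hlen⟩ := jordan_pathlist hJ hj₀
  set m := l.length with hm
  have hm3 : 3 ≤ m := by omega
  have hj₀l : j₀ ∉ l := fun h => ((hcov _).1 h).2 rfl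
  have hmemJ : ∀ {k : ℕ} (hk : k < m), l.get ⟨k, hk⟩ ∈ J ∧ l.get ⟨k, hk⟩ ≠ j₀ := by
    intro k hk
    have h2 := (hcov _).1 (List.get_mem l ⟨k, hk⟩)
    exact ⟨h2.1, fun h => h2.2 h⟩
  have hget : ∀ (k k' : ℕ) (hk : k < m) (hk' : k' < m), k = k' →
      l.get ⟨k, hk⟩ = l.get ⟨k', hk'⟩ := by
    intro k k' hk hk' h
    subst h
    rfl
  have hendonly : ∀ (k) (hk : k < m), adjP j₀ (l.get ⟨k, hk⟩) → k = 0 ∨ k = m - 1 := by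
    intro k hk hadj
    by_contra hk'
    push_neg at hk'
    have hk1 : 0 < k := Nat.pos_of_ne_zero hk'.1
    have hk2 : k + 1 < m := by omega
    have h1 : adjP (l.get ⟨k, hk⟩) (l.get ⟨k - 1, by omega⟩) := by
      apply adjP_symm
      have h2 := List.isChain_iff_getElem.1 hch (k - 1) (by omega)
      have he : k - 1 + 1 = k := by omega
      simp only [he] at h2
      exact h2
    have h2 : adjP (l.get ⟨k, hk⟩) (l.get ⟨k + 1, hk2⟩) := List.isChain_iff_getElem.1 hch k (by omega)
    refine jordan_no_three hJ (hmemJ hk).1 (hmemJ (by omega : k - 1 < m)).1 (hmemJ hk2).1 hj₀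
      h1 h2 (adjP_symm hadj) ?_ (hmemJ _).2 (hmemJ _).2
    intro h
    rw [hnd.get_inj_iff] at h
    have h3 : k - 1 = k + 1 := congrArg Fin.val h
    omega
  have h0m : 0 < m := by omega
  have hm1 : m - 1 < m := by omega
  have hends : adjP j₀ (l.get ⟨0, h0m⟩) ∧ adjP j₀ (l.get ⟨m - 1, hm1⟩) := by
    obtain ⟨u, v, huJ, hvJ, huv, hu, hv⟩ := jordan_two_nbrs hJ hj₀
    have hul : u ∈ l := (hcov u).2 ⟨huJ, fun h => adjP_irr _ ((Set.mem_singleton_iff.1 h) ▸ hu)⟩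
    have hvl : v ∈ l := (hcov v).2 ⟨hvJ, fun h => adjP_irr _ ((Set.mem_singleton_iff.1 h) ▸ hv)⟩
    obtain ⟨⟨iu, hiu⟩, hu'⟩ := List.mem_iff_get.1 hul
    obtain ⟨⟨iv, hiv⟩, hv'⟩ := List.mem_iff_get.1 hvl
    have eu := hendonly iu hiu (by rw [hu']; exact hu)
    have ev := hendonly iv hiv (by rw [hv']; exact hv)
    have hiuv : iu ≠ iv := by intro h; subst h; exact huv (hu'.symm.trans hv')
    rcases eu with h1 | h1 <;> rcases ev with h2 | h2
    · omega
    · constructor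
      · rw [hget 0 iu h0m hiu h1.symm, hu']; exact hu
      · rw [hget (m - 1) iv hm1 hiv h2.symm, hv']; exact hv
    · constructor
      · rw [hget 0 iv h0m hiv h2.symm, hv']; exact hv
      · rw [hget (m - 1) iu hm1 hiu h1.symm, hu']; exact hu
    · omega
  have liff : ∀ a b (ha : a < m) (hb : b < m),
      adjP (l.get ⟨a, ha⟩) (l.get ⟨b, hb⟩) ↔ (b = a + 1 ∨ a = b + 1) := by
    intro a b ha hb
    constructor
    · exact hcons a b ha hb
    · rintro (rfl | rfl)
      · exact List.isChain_iff_getElem.1 hch a (by omega)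
      · exact adjP_symm (List.isChain_iff_getElem.1 hch b (by omega))
  refine ⟨j₀ :: l, List.nodup_cons.2 ⟨hj₀l, hnd⟩, ?_, ?_, ?_⟩
  · intro v
    simp only [List.mem_cons]
    constructor
    · rintro (rfl | h)
      · exact hj₀
      · exact ((hcov v).1 h).1
    · intro hv
      by_cases h : v = j₀
      · exact Or.inl h
      · exact Or.inr ((hcov v).2 ⟨hv, h⟩)
  · simp only [List.length_cons, ← hm]
    omega
  · intro i j hi hj
    simp only [List.length_cons] at hi hj
    have hL1 : ((j₀ :: l).length - 1) = m := by simp only [List.length_cons]; omega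
    rw [hL1]
    cases i with
    | zero =>
      cases j with
      | zero =>
        constructor
        · intro h
          exact absurd h (adjP_irr _)
        · rintro ⟨h, _⟩
          exact absurd rfl h
      | succ jj =>
        have hjj : jj < m := by omega
        show adjP j₀ (l.get ⟨jj, hjj⟩) ↔ _
        constructor
        · intro h
          have h2 := hendonly jj hjj h
          refine ⟨by omega, ?_⟩
          rcases h2 with h' | h'
          · exact Or.inl (by omega)
          · right; right; left; exact ⟨rfl, by omega⟩
        · rintro ⟨hne', hcase⟩
          have h2 : jj = 0 ∨ jj = m - 1 := by omega
          rcases h2 with rfl | h'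
          · exact hends.1
          · rw [hget jj (m - 1) hjj hm1 h']
            exact hends.2
    | succ ii =>
      cases j with
      | zero =>
        have hii : ii < m := by omega
        show adjP (l.get ⟨ii, hii⟩) j₀ ↔ _
        constructor
        · intro h
          have h2 := hendonly ii hii (adjP_symm h)
          refine ⟨by omega, ?_⟩
          rcases h2 with h' | h'
          · exact Or.inr (Or.inl (by omega))
          · right; right; right; exact ⟨rfl, by omega⟩
        · rintro ⟨hne', hcase⟩
          have h2 : ii = 0 ∨ ii = m - 1 := by omega
          apply adjP_symm
          rcases h2 with rfl | h'
          · exact hends.1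
          · rw [hget ii (m - 1) hii hm1 h']
            exact hends.2
      | succ jj =>
        have hii : ii < m := by omega
        have hjj : jj < m := by omega
        show adjP (l.get ⟨ii, hii⟩) (l.get ⟨jj, hjj⟩) ↔ _
        rw [liff ii jj hii hjj]
        omega

end Jordan
section ZModCount

/-- Cyclic adjacency on `ZMod n`. -/
def adjZ {n : ℕ} (i k : ZMod n) : Prop := k = i + 1 ∨ i = k + 1

lemma adjZ_symm {n : ℕ} : Symmetric (@adjZ n) := fun _ _ h => h.symm

variable {n : ℕ} [NeZero n]

lemma zmod_reach_down {P : Set (ZMod n)} {x : ZMod n} :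
    ∀ k : ℕ, (∀ s : ℕ, s ≤ k → x - (s : ℕ) ∈ P) → GReach adjZ P x (x - (k : ℕ)) := by
  intro k
  induction k with
  | zero => intro _; simp only [Nat.cast_zero, sub_zero]; exact Relation.ReflTransGen.refl
  | succ k ih =>
    intro hs
    have hr := ih (fun s h => hs s (by omega))
    refine hr.tail ⟨hs k (by omega), hs (k + 1) (le_refl _), Or.inr ?_⟩
    push_cast
    ring

lemma zmod_exists_boundary {P : Set (ZMod n)} (hproper : P ≠ Set.univ) {x : ZMod n}
    (hx : x ∈ P) :
    ∃ i : ZMod n, (i ∈ P ∧ i - 1 ∉ P) ∧ GReach adjZ P x i := by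
  classical
  obtain ⟨g, hg⟩ : ∃ g, g ∉ P := by
    by_contra h
    push_neg at h
    exact hproper (Set.eq_univ_of_forall h)
  have hxg : x ≠ g := fun h => hg (h ▸ hx)
  have hvpos : 0 < (x - g).val := by
    rcases Nat.eq_zero_or_pos (x - g).val with h | h
    · exfalso
      have : x - g = 0 := by
        have := ZMod.natCast_rightInverse (n := n) (x - g)
        rw [h] at this
        simpa using this.symm
      exact hxg (by linear_combination this)
    · exact h
  have hex : ∃ k : ℕ, x - ((k + 1 : ℕ) : ZMod n) ∉ P := by
    refine ⟨(x - g).val - 1, ?_⟩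
    have h1 : ((x - g).val - 1 + 1 : ℕ) = (x - g).val := by omega
    rw [h1]
    have h2 : ((((x - g).val : ℕ)) : ZMod n) = x - g := ZMod.natCast_rightInverse _
    rw [h2]
    simpa using hg
  set k₀ := Nat.find hex with hk₀
  have hmin : ∀ s : ℕ, s ≤ k₀ → x - (s : ℕ) ∈ P := by
    intro s hsle
    rcases Nat.eq_zero_or_pos s with rfl | hspos
    · simpa using hx
    · have : ¬ (x - ((s - 1 + 1 : ℕ) : ZMod n) ∉ P) := Nat.find_min hex (by omega)
      have h1 : (s - 1 + 1 : ℕ) = s := by omega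
      rw [h1] at this
      exact not_not.1 this
  refine ⟨x - (k₀ : ℕ), ⟨hmin k₀ (le_refl _), ?_⟩, zmod_reach_down k₀ hmin⟩
  have h1 : x - (k₀ : ℕ) - 1 = x - ((k₀ + 1 : ℕ) : ZMod n) := by push_cast; ring
  rw [h1]
  exact Nat.find_spec hex

lemma zmod_boundary_unique {P : Set (ZMod n)} {i i' : ZMod n}
    (hi : i ∈ P ∧ i - 1 ∉ P) (hi' : i' ∈ P ∧ i' - 1 ∉ P)
    (hr : GReach adjZ P i i') : i = i' := by
  classical
  -- run set
  set R : Set (ZMod n) := {j | ∃ t : ℕ, j = i + (t : ℕ) ∧ ∀ s : ℕ, s ≤ t → i + (s : ℕ) ∈ P}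
    with hR
  have hiR : i ∈ R := ⟨0, by simp, fun s hs => by
    have : s = 0 := by omega
    subst this
    simpa using hi.1⟩
  have hclosed : ∀ j j', j ∈ R → GStep adjZ P j j' → j' ∈ R := by
    rintro j j' ⟨t, rfl, hpre⟩ ⟨_, hj'P, hstep⟩
    rcases hstep with h | h
    · refine ⟨t + 1, by rw [h]; push_cast; ring, ?_⟩
      intro s hs
      rcases Nat.lt_or_ge s (t + 1) with h' | h'
      · exact hpre s (by omega)
      · have : s = t + 1 := by omega
        subst this
        have he : i + ((t + 1 : ℕ) : ZMod n) = j' := by rw [h]; push_cast; ring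
        rw [he]
        exact hj'P
    · rcases Nat.eq_zero_or_pos t with rfl | htpos
      · exfalso
        apply hi.2
        have he : i - 1 = j' := by
          have : i + ((0 : ℕ) : ZMod n) = j' + 1 := h
          push_cast at this
          linear_combination this
        rw [he]
        exact hj'P
      · refine ⟨t - 1, ?_, fun s hs => hpre s (by omega)⟩
        have : i + (t : ℕ) = j' + 1 := h
        have hc : ((t : ℕ) : ZMod n) = ((t - 1 : ℕ) : ZMod n) + 1 := by
          have h1 : (t - 1 + 1 : ℕ) = t := by omega
          rw [← h1]
          push_cast
          ring
        rw [hc] at this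
        linear_combination this.symm
  have hRr : ∀ j, GReach adjZ P i j → j ∈ R := by
    intro j hj
    induction hj with
    | refl => exact hiR
    | tail h hstep ih => exact hclosed _ _ ih hstep
  obtain ⟨t, hte, hpre⟩ := hRr i' hr
  rcases Nat.eq_zero_or_pos t with rfl | htpos
  · rw [hte]; simp
  · exfalso
    apply hi'.2
    have h1 : i' - 1 = i + ((t - 1 : ℕ) : ZMod n) := by
      rw [hte]
      have h2 : (t - 1 + 1 : ℕ) = t := by omega
      rw [← h2]
      push_cast
      ring
    rw [h1]
    exact hpre (t - 1) (by omega)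

theorem zmod_comp_count {P : Set (ZMod n)} (hPne : P.Nonempty) (hproper : P ≠ Set.univ) :
    {S : Set (ZMod n) | ∃ x ∈ P, S = {y | GReach adjZ P x y}}.ncard
      = {i : ZMod n | i ∈ P ∧ i - 1 ∉ P}.ncard := by
  classical
  have himg : {S : Set (ZMod n) | ∃ x ∈ P, S = {y | GReach adjZ P x y}}
      = (fun i => {y | GReach adjZ P i y}) '' {i : ZMod n | i ∈ P ∧ i - 1 ∉ P} := by
    ext S
    constructor
    · rintro ⟨x, hx, rfl⟩
      obtain ⟨i, hib, hri⟩ := zmod_exists_boundary hproper hx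
      refine ⟨i, hib, ?_⟩
      show ({y | GReach adjZ P i y} : Set (ZMod n)) = {y | GReach adjZ P x y}
      ext z
      exact ⟨fun hz => Relation.ReflTransGen.trans hri hz,
        fun hz => Relation.ReflTransGen.trans (gReach_symm adjZ_symm hri) hz⟩
    · rintro ⟨i, hib, rfl⟩
      exact ⟨i, hib.1, rfl⟩
  rw [himg]
  apply Set.ncard_image_of_injOn
  intro i hi i' hi' heq
  apply zmod_boundary_unique hi hi'
  have h3 : i' ∈ {y | GReach adjZ P i' y} := Relation.ReflTransGen.refl
  have h4 : ({y | GReach adjZ P i y} : Set (ZMod n)) = {y | GReach adjZ P i' y} := heq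
  rw [← h4] at h3
  exact h3

theorem zmod_boundary_count (P : Set (ZMod n)) :
    {i : ZMod n | i ∈ P ∧ i - 1 ∉ P}.ncard = {i : ZMod n | i ∉ P ∧ i - 1 ∈ P}.ncard := by
  classical
  haveI : Fintype (ZMod n) := ZMod.fintype n
  have hf1 : {i : ZMod n | i ∈ P ∧ i - 1 ∉ P}.Finite := Set.toFinite _
  have hf2 : {i : ZMod n | i ∉ P ∧ i - 1 ∈ P}.Finite := Set.toFinite _
  rw [Set.ncard_eq_toFinset_card _ hf1, Set.ncard_eq_toFinset_card _ hf2]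
  have e1 : hf1.toFinset = Finset.univ.filter (fun i : ZMod n => i ∈ P ∧ i - 1 ∉ P) := by
    ext i; simp
  have e2 : hf2.toFinset = Finset.univ.filter (fun i : ZMod n => i ∉ P ∧ i - 1 ∈ P) := by
    ext i; simp
  rw [e1, e2]
  have key1 : (Finset.univ.filter (fun i : ZMod n => i ∈ P ∧ i - 1 ∉ P)).card
      + (Finset.univ.filter (fun i : ZMod n => i ∈ P ∧ i - 1 ∈ P)).card
      = (Finset.univ.filter (fun i : ZMod n => i ∈ P)).card := by
    rw [show Finset.univ.filter (fun i : ZMod n => i ∈ P ∧ i - 1 ∉ P)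
        = (Finset.univ.filter (fun i : ZMod n => i ∈ P)).filter (fun i => ¬ (i - 1 ∈ P)) by
      rw [Finset.filter_filter]]
    rw [show Finset.univ.filter (fun i : ZMod n => i ∈ P ∧ i - 1 ∈ P)
        = (Finset.univ.filter (fun i : ZMod n => i ∈ P)).filter (fun i => i - 1 ∈ P) by
      rw [Finset.filter_filter]]
    rw [Nat.add_comm]
    exact Finset.card_filter_add_card_filter_not _
  have key2 : (Finset.univ.filter (fun i : ZMod n => i ∉ P ∧ i - 1 ∈ P)).card
      + (Finset.univ.filter (fun i : ZMod n => i ∈ P ∧ i - 1 ∈ P)).card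
      = (Finset.univ.filter (fun i : ZMod n => i - 1 ∈ P)).card := by
    rw [show Finset.univ.filter (fun i : ZMod n => i ∉ P ∧ i - 1 ∈ P)
        = (Finset.univ.filter (fun i : ZMod n => i - 1 ∈ P)).filter (fun i => ¬ (i ∈ P)) by
      rw [Finset.filter_filter]
      apply Finset.filter_congr
      intro i _
      constructor
      · rintro ⟨h1, h2⟩; exact ⟨h2, h1⟩
      · rintro ⟨h1, h2⟩; exact ⟨h2, h1⟩]
    rw [show Finset.univ.filter (fun i : ZMod n => i ∈ P ∧ i - 1 ∈ P)
        = (Finset.univ.filter (fun i : ZMod n => i - 1 ∈ P)).filter (fun i => i ∈ P) by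
      rw [Finset.filter_filter]
      apply Finset.filter_congr
      intro i _
      constructor
      · rintro ⟨h1, h2⟩; exact ⟨h2, h1⟩
      · rintro ⟨h1, h2⟩; exact ⟨h2, h1⟩]
    rw [Nat.add_comm]
    exact Finset.card_filter_add_card_filter_not _
  have key3 : (Finset.univ.filter (fun i : ZMod n => i - 1 ∈ P)).card
      = (Finset.univ.filter (fun i : ZMod n => i ∈ P)).card := by
    refine Finset.card_bij' (fun i _ => i - 1) (fun i _ => i + 1) ?hi ?hj ?left ?right
    case hi =>
      intro a ha
      simp only [Finset.mem_filter, Finset.mem_univ, true_and] at ha ⊢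
      exact ha
    case hj =>
      intro a ha
      simp only [Finset.mem_filter, Finset.mem_univ, true_and] at ha ⊢
      simpa using ha
    case left =>
      intro a ha
      ring
    case right =>
      intro a ha
      ring
  omega

end ZModCount
section Final

lemma reach_image {n : ℕ} [NeZero n] {e : ZMod n → ℤ × ℤ}
    (hadj : ∀ i k : ZMod n, adjP (e i) (e k) ↔ adjZ i k) (P : Set (ZMod n))
    (hPinj : ∀ i k : ZMod n, i ∈ P → e i = e k → i = k) :
    ∀ {i : ZMod n} {y : ℤ × ℤ}, i ∈ P → GReach adjP (e '' P) (e i) y →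
      ∃ k, k ∈ P ∧ y = e k ∧ GReach adjZ P i k := by
  intro i y hiP hr
  induction hr with
  | refl => exact ⟨i, hiP, rfl, Relation.ReflTransGen.refl⟩
  | @tail b c _ hstep ih =>
    obtain ⟨k, hkP, rfl, hik⟩ := ih
    obtain ⟨k', hk'P, rfl⟩ := hstep.2.1
    exact ⟨k', hk'P, rfl, hik.tail ⟨hkP, hk'P, (hadj k k').1 hstep.2.2⟩⟩

lemma reach_image' {n : ℕ} [NeZero n] {e : ZMod n → ℤ × ℤ}
    (hadj : ∀ i k : ZMod n, adjP (e i) (e k) ↔ adjZ i k) (P : Set (ZMod n))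
    {i k : ZMod n} (h : GReach adjZ P i k) : GReach adjP (e '' P) (e i) (e k) := by
  induction h with
  | refl => exact Relation.ReflTransGen.refl
  | @tail b c _ hstep ih =>
    exact ih.tail ⟨⟨b, hstep.1, rfl⟩, ⟨c, hstep.2.1, rfl⟩, (hadj _ _).2 hstep.2.2⟩

/-- A nonempty proper subset of a digital Jordan curve has the same number of
connected components as its complement in the curve. -/
theorem stmt14 (J C : Set (ℤ × ℤ)) (hJ : IsJordanCurve khalPlane J)
    (hC : C ⊆ J) (hne : C.Nonempty) (hprop : C ≠ J) :
    {S : Set (ℤ × ℤ) | ∃ x ∈ C, S = @connectedComponentIn _ khalPlane C x}.ncard =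
      {S : Set (ℤ × ℤ) | ∃ x ∈ J \ C,
        S = @connectedComponentIn _ khalPlane (J \ C) x}.ncard := by
  classical
  obtain ⟨L, hnd, hcov, hlen, hiff⟩ := jordan_cycle hJ
  set n := J.ncard with hn
  have hn4 : 4 ≤ n := hJ.2.1
  haveI : NeZero n := ⟨by omega⟩
  haveI : Fact (1 < n) := ⟨by omega⟩
  have hval : ∀ i : ZMod n, i.val < L.length := fun i => by rw [hlen]; exact ZMod.val_lt i
  set e : ZMod n → ℤ × ℤ := fun i => L.get ⟨i.val, hval i⟩ with he
  have hgetL : ∀ (k k' : ℕ) (hk : k < L.length) (hk' : k' < L.length), k = k' →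
      L.get ⟨k, hk⟩ = L.get ⟨k', hk'⟩ := by
    intro k k' hk hk' h
    subst h
    rfl
  have hinj : Function.Injective e := by
    intro i k h
    rw [he] at h
    simp only at h
    rw [hnd.get_inj_iff] at h
    have hv : i.val = k.val := congrArg Fin.val h
    exact ZMod.val_injective n hv
  have hsurj : ∀ v ∈ J, ∃ i : ZMod n, e i = v := by
    intro v hv
    obtain ⟨⟨k, hk⟩, hk'⟩ := List.mem_iff_get.1 ((hcov v).2 hv)
    refine ⟨(k : ZMod n), ?_⟩
    rw [he]
    simp only
    rw [← hk']
    apply hgetL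
    exact ZMod.val_cast_of_lt (by rw [← hlen]; exact hk)
  have heJ : ∀ i : ZMod n, e i ∈ J := fun i => (hcov _).1 (List.get_mem L ⟨i.val, hval i⟩)
  have hzmod : ∀ i k : ZMod n, (k = i + 1) ↔ k.val = (i.val + 1) % n := by
    intro i k
    constructor
    · intro h
      rw [h, ZMod.val_add, ZMod.val_one]
    · intro h
      apply ZMod.val_injective n
      rw [h, ZMod.val_add, ZMod.val_one]
  have hadj : ∀ i k : ZMod n, adjP (e i) (e k) ↔ adjZ i k := by
    intro i k
    have h1 := hiff i.val k.val (hval i) (hval k)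
    show adjP (L.get ⟨i.val, hval i⟩) (L.get ⟨k.val, hval k⟩) ↔ adjZ i k
    rw [h1]
    unfold adjZ
    rw [hzmod i k, hzmod k i]
    have hin : i.val < n := ZMod.val_lt i
    have hkn : k.val < n := ZMod.val_lt k
    have hmi : (i.val + 1 < n ∧ (i.val + 1) % n = i.val + 1) ∨
        (i.val = n - 1 ∧ (i.val + 1) % n = 0) := by
      rcases Nat.lt_or_ge (i.val + 1) n with h | h
      · exact Or.inl ⟨h, Nat.mod_eq_of_lt h⟩
      · refine Or.inr ⟨by omega, ?_⟩
        have h2 : i.val + 1 = n := by omega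
        rw [h2]
        exact Nat.mod_self n
    have hmk : (k.val + 1 < n ∧ (k.val + 1) % n = k.val + 1) ∨
        (k.val = n - 1 ∧ (k.val + 1) % n = 0) := by
      rcases Nat.lt_or_ge (k.val + 1) n with h | h
      · exact Or.inl ⟨h, Nat.mod_eq_of_lt h⟩
      · refine Or.inr ⟨by omega, ?_⟩
        have h2 : k.val + 1 = n := by omega
        rw [h2]
        exact Nat.mod_self n
    generalize (i.val + 1) % n = a at hmi ⊢
    generalize (k.val + 1) % n = b at hmk ⊢
    have hLn : L.length = n := hlen
    omega
  have hcomptrans : ∀ P : Set (ZMod n),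
      {S : Set (ℤ × ℤ) | ∃ x ∈ e '' P, S = @connectedComponentIn _ khalPlane (e '' P) x}.ncard
        = {T : Set (ZMod n) | ∃ i ∈ P, T = {k | GReach adjZ P i k}}.ncard := by
    intro P
    have hcomp : ∀ i ∈ P, @connectedComponentIn _ khalPlane (e '' P) (e i)
        = e '' {k | GReach adjZ P i k} := by
      intro i hiP
      rw [@connectedComponentIn_eq_reach _ khalPlane khalPlane_alex (e '' P) (e i) ⟨i, hiP, rfl⟩]
      apply Set.Subset.antisymm
      · intro y hy
        obtain ⟨k, hkP, rfl, hik⟩ :=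
          reach_image hadj P (fun a b _ hab => hinj hab) hiP hy
        exact ⟨k, hik, rfl⟩
      · rintro y ⟨k, hik, rfl⟩
        exact reach_image' hadj P hik
    have hSets : {S : Set (ℤ × ℤ) | ∃ x ∈ e '' P, S = @connectedComponentIn _ khalPlane (e '' P) x}
        = (Set.image e) '' {T : Set (ZMod n) | ∃ i ∈ P, T = {k | GReach adjZ P i k}} := by
      ext S
      constructor
      · rintro ⟨x, ⟨i, hiP, rfl⟩, rfl⟩
        exact ⟨{k | GReach adjZ P i k}, ⟨i, hiP, rfl⟩, (hcomp i hiP).symm⟩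
      · rintro ⟨T, ⟨i, hiP, rfl⟩, rfl⟩
        exact ⟨e i, ⟨i, hiP, rfl⟩, (hcomp i hiP).symm⟩
    rw [hSets, Set.ncard_image_of_injective _ (Set.image_injective.2 hinj)]
  set D : Set (ZMod n) := {i | e i ∈ C} with hD
  have heD : e '' D = C := by
    apply Set.Subset.antisymm
    · rintro v ⟨i, hi, rfl⟩
      exact hi
    · intro v hv
      obtain ⟨i, rfl⟩ := hsurj v (hC hv)
      exact ⟨i, hv, rfl⟩
  have heDc : e '' Dᶜ = J \ C := by
    apply Set.Subset.antisymm
    · rintro v ⟨i, hi, rfl⟩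
      exact ⟨heJ i, hi⟩
    · rintro v ⟨hvJ, hvC⟩
      obtain ⟨i, rfl⟩ := hsurj v hvJ
      exact ⟨i, hvC, rfl⟩
  have hDne : D.Nonempty := by
    obtain ⟨c0, hc0⟩ := hne
    obtain ⟨i, rfl⟩ := hsurj c0 (hC hc0)
    exact ⟨i, hc0⟩
  have hDcne : Dᶜ.Nonempty := by
    obtain ⟨v, hvJ, hvC⟩ : ∃ v, v ∈ J ∧ v ∉ C := by
      by_contra h
      push_neg at h
      exact hprop (Set.Subset.antisymm hC h)
    obtain ⟨i, rfl⟩ := hsurj v hvJ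
    exact ⟨i, hvC⟩
  have hDproper : D ≠ Set.univ := by
    intro h
    obtain ⟨i, hi⟩ := hDcne
    rw [h] at hi
    exact hi (Set.mem_univ i)
  have hDcproper : Dᶜ ≠ Set.univ := by
    intro h
    obtain ⟨i, hi⟩ := hDne
    have h2 : i ∈ Dᶜ := by rw [h]; exact Set.mem_univ i
    exact h2 hi
  rw [← heDc, ← heD, hcomptrans D, hcomptrans Dᶜ,
    zmod_comp_count hDne hDproper, zmod_comp_count hDcne hDcproper,
    zmod_boundary_count D]
  congr 1
  ext i
  simp only [Set.mem_setOf_eq, Set.mem_compl_iff, not_not]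

end Final
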